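/- The real line ℝ with its usual metric does not have the Hrushovski–Solecki–Vershik property. In fact, for the finite subset Y = {0, 1, 2, 3} ⊆ ℝ there is no finite subset Z with Y ⊆ Z ⊆ ℝ such that every partial isometry of Y extends to a distance-preserving bijection of Z onto itself: the partial isometry of Y with domain {0, 1, 2} sending t ↦ t + 1 admits no such extension for any finite Z. -/

import Mathlib

/-- A metric space `X` has the *Hrushovski–Solecki–Vershik property* if for every finite
subset `Y` of `X` there exists a finite subset `Z` with `Y ⊆ Z ⊆ X` such that every
partial isometry of `Y` (distance-preserving bijection between two subsets of `Y`)
extends to a distance-preserving bijection of `Z` onto itself. -/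
def HSVProperty (X : Type*) [MetricSpace X] : Prop :=
  ∀ Y : Set X, Y.Finite →
    ∃ (Z : Set X) (_ : Z.Finite) (hYZ : Y ⊆ Z),
      ∀ (A B : Set X) (hAY : A ⊆ Y), B ⊆ Y →
        ∀ p : X → X, Set.BijOn p A B →
          (∀ a ∈ A, ∀ b ∈ A, dist (p a) (p b) = dist a b) →
          ∃ j : Z ≃ᵢ Z, ∀ a, ∀ ha : a ∈ A, (j ⟨a, hYZ (hAY ha)⟩ : X) = p a

lemma no_ext : ∀ Z : Set ℝ, Z.Finite → ({0, 1, 2, 3} : Set ℝ) ⊆ Z →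
      ¬ ∃ j : Z ≃ᵢ Z, ∀ t : Z, (t : ℝ) ∈ ({0, 1, 2} : Set ℝ) → ((j t : ℝ) = (t : ℝ) + 1) := by
  intro Z hZfin hYZ ⟨j, hj⟩
  have h0Z : (0 : ℝ) ∈ Z := hYZ (by norm_num)
  have h1Z : (1 : ℝ) ∈ Z := hYZ (by norm_num)
  have h0 : ((j ⟨0, h0Z⟩ : Z) : ℝ) = 1 := by
    have := hj ⟨0, h0Z⟩ (by norm_num); simpa using this
  have h1 : ((j ⟨1, h1Z⟩ : Z) : ℝ) = 2 := by
    have := hj ⟨1, h1Z⟩ (by norm_num); norm_num at this; linarith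
  -- every point of Z is shifted by +1
  have key : ∀ z : Z, ((j z : Z) : ℝ) = (z : ℝ) + 1 := by
    intro z
    have d0 : dist ((j z : Z) : ℝ) 1 = dist (z : ℝ) 0 := by
      have := j.dist_eq z ⟨0, h0Z⟩
      rw [Subtype.dist_eq, Subtype.dist_eq] at this
      rw [← h0]; simpa using this
    have d1 : dist ((j z : Z) : ℝ) 2 = dist (z : ℝ) 1 := by
      have := j.dist_eq z ⟨1, h1Z⟩
      rw [Subtype.dist_eq, Subtype.dist_eq] at this
      rw [← h1]; simpa using this
    have d0' : |((j z : Z) : ℝ) - 1| = |(z : ℝ)| := by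
      simpa [Real.dist_eq] using d0
    have d1' : |((j z : Z) : ℝ) - 2| = |(z : ℝ) - 1| := by
      simpa [Real.dist_eq] using d1
    have e0 : (((j z : Z) : ℝ) - 1)^2 = (z : ℝ)^2 := by
      rw [← sq_abs, d0', sq_abs]
    have e1 : (((j z : Z) : ℝ) - 2)^2 = ((z : ℝ) - 1)^2 := by
      rw [← sq_abs, d1', sq_abs]
    nlinarith [e0, e1]
  -- take a maximal element of Z
  obtain ⟨m, hmZ, hmax⟩ := Set.Finite.exists_maximalFor id Z hZfin ⟨0, h0Z⟩
  have hjm : ((j ⟨m, hmZ⟩ : Z) : ℝ) = m + 1 := key ⟨m, hmZ⟩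
  have hmem : ((j ⟨m, hmZ⟩ : Z) : ℝ) ∈ Z := (j ⟨m, hmZ⟩).2
  rw [hjm] at hmem
  have h2 := hmax (j := m + 1) hmem (by simp)
  simp only [id] at h2
  linarith

theorem real_line_not_hsv :
    ¬ HSVProperty ℝ ∧
    ∀ Z : Set ℝ, Z.Finite → ({0, 1, 2, 3} : Set ℝ) ⊆ Z →
      ¬ ∃ j : Z ≃ᵢ Z, ∀ t : Z, (t : ℝ) ∈ ({0, 1, 2} : Set ℝ) → ((j t : ℝ) = (t : ℝ) + 1) := by
  constructor
  · intro h
    obtain ⟨Z, hZfin, hYZ, hext⟩ := h ({0, 1, 2, 3} : Set ℝ) (by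
      apply Set.Finite.insert; apply Set.Finite.insert; apply Set.Finite.insert
      exact Set.finite_singleton _)
    have hA : ({0, 1, 2} : Set ℝ) ⊆ ({0, 1, 2, 3} : Set ℝ) := by
      intro x hx; simp only [Set.mem_insert_iff, Set.mem_singleton_iff] at hx ⊢; tauto
    have hB : ({1, 2, 3} : Set ℝ) ⊆ ({0, 1, 2, 3} : Set ℝ) := by
      intro x hx; simp only [Set.mem_insert_iff, Set.mem_singleton_iff] at hx ⊢; tauto
    have hbij : Set.BijOn (fun x : ℝ => x + 1) ({0, 1, 2} : Set ℝ) ({1, 2, 3} : Set ℝ) := by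
      constructor
      · intro x hx; simp only [Set.mem_insert_iff, Set.mem_singleton_iff] at hx ⊢; rcases hx with h | h | h <;> norm_num [h]
      constructor
      · intro x _ y _ hxy; simpa using hxy
      · intro y hy
        simp only [Set.mem_insert_iff, Set.mem_singleton_iff] at hy
        rcases hy with h | h | h
        · exact ⟨0, by norm_num, by norm_num [h]⟩
        · exact ⟨1, by norm_num, by norm_num [h]⟩
        · exact ⟨2, by norm_num, by norm_num [h]⟩
    obtain ⟨j, hj⟩ := hext ({0, 1, 2} : Set ℝ) ({1, 2, 3} : Set ℝ) hA hB
      (fun x => x + 1) hbij (by intro a _ b _; simp [Real.dist_eq])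
    exact no_ext Z hZfin hYZ ⟨j, fun t ht => by
      have := hj (t : ℝ) ht
      rwa [Subtype.coe_eta] at this⟩
  · exact no_ext
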